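/- For the projected SOR update of the i-th component, where x_i^{k+1} = max(x̂_i, 0) with x̂_i the unconstrained SOR update, the componentwise dissipation inequality V(…, x_i^{k+1}, …) − V(…, x_i^k, …) ≤ −(a_ii/h)(x_i^{k+1} − x_i^k)² ≤ 0 still holds, because the projected update equals an SOR update with some nonnegative step size not exceeding h. -/

import Mathlib

open Matrix Finset

theorem stmt_5 (n : ℕ) (A : Matrix (Fin n) (Fin n) ℝ) (hA : A.IsSymm)
    (hdiag : ∀ i, 0 < A i i) (b : Fin n → ℝ)
    (ω : ℝ) (hω : ω ∈ Set.Ioo (0 : ℝ) 2) (h : ℝ) (hh : h = 2 * ω / (2 - ω))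
    (V : (Fin n → ℝ) → ℝ)
    (hV : V = fun x => (1 / 2) * (x ⬝ᵥ (A *ᵥ x)) - x ⬝ᵥ b)
    (xk xk1 : Fin n → ℝ) (hxk : ∀ j, 0 ≤ xk j) (i : Fin n)
    (hproj : xk1 i =
      max ((1 - ω) * xk i + (ω / A i i) *
        (b i - (∑ j ∈ univ.filter (fun j => j < i), A i j * xk1 j) -
          (∑ j ∈ univ.filter (fun j => i < j), A i j * xk j))) 0) :
    V (fun j => if j ≤ i then xk1 j else xk j) -
        V (fun j => if j < i then xk1 j else xk j)
      ≤ -(A i i / h) * (xk1 i - xk i) ^ 2 ∧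
    -(A i i / h) * (xk1 i - xk i) ^ 2 ≤ 0 := by
  obtain ⟨hω0, hω2⟩ := hω
  have ha : 0 < A i i := hdiag i
  have hω2' : 0 < 2 - ω := by linarith
  have hhpos : 0 < h := by rw [hh]; positivity
  set t : ℝ := xk1 i - xk i with ht
  set S1 : ℝ := ∑ j ∈ univ.filter (fun j => j < i), A i j * xk1 j with hS1
  set S2 : ℝ := ∑ j ∈ univ.filter (fun j => i < j), A i j * xk j with hS2
  set c : ℝ := b i - S1 - S2 with hc
  set y : Fin n → ℝ := fun j => if j < i then xk1 j else xk j with hy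
  have hyi : y i = xk i := by simp [hy]
  have hz : (fun j => if j ≤ i then xk1 j else xk j) = y + t • (Pi.single i 1 : Fin n → ℝ) := by
    funext j
    by_cases hj : j = i
    · subst hj
      simp [hy, ht]
    · have h1 : (j ≤ i) ↔ (j < i) := ⟨fun h' => lt_of_le_of_ne h' hj, le_of_lt⟩
      simp [hy, Pi.single_apply, hj, h1]
  have hsym : ∀ v w : Fin n → ℝ, v ⬝ᵥ (A *ᵥ w) = w ⬝ᵥ (A *ᵥ v) := by
    intro v w
    rw [dotProduct_mulVec]
    nth_rewrite 1 [← hA.eq]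
    rw [vecMul_transpose, dotProduct_comm]
  have hsplit : (A *ᵥ y) i = S1 + A i i * xk i + S2 := by
    have huniv : (univ : Finset (Fin n)) =
        (univ.filter (fun j => j < i)) ∪ ({i} ∪ univ.filter (fun j => i < j)) := by
      ext j
      simp only [mem_union, mem_filter, mem_univ, true_and, mem_singleton]
      constructor
      · intro _
        rcases lt_trichotomy j i with h' | h' | h'
        · exact Or.inl h'
        · exact Or.inr (Or.inl h')
        · exact Or.inr (Or.inr h')
      · intro _; trivial
    have hd1 : Disjoint (univ.filter (fun j => j < i))
        (({i} : Finset (Fin n)) ∪ univ.filter (fun j => i < j)) := by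
      rw [Finset.disjoint_left]
      intro j hj hj'
      simp only [mem_filter, mem_univ, true_and] at hj
      simp only [mem_union, mem_singleton, mem_filter, mem_univ, true_and] at hj'
      rcases hj' with h' | h'
      · exact absurd hj (by simp [h'])
      · exact absurd (hj.trans h') (lt_irrefl j)
    have hd2 : Disjoint ({i} : Finset (Fin n)) (univ.filter (fun j => i < j)) := by
      rw [Finset.disjoint_left]
      intro j hj hj'
      simp only [mem_singleton] at hj
      simp only [mem_filter, mem_univ, true_and] at hj'
      exact absurd hj' (by simp [hj])
    have hmv : (A *ᵥ y) i = ∑ j, A i j * y j := by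
      simp [mulVec, dotProduct]
    rw [hmv, huniv, Finset.sum_union hd1, Finset.sum_union hd2, Finset.sum_singleton]
    have e1 : ∑ j ∈ univ.filter (fun j => j < i), A i j * y j = S1 := by
      apply Finset.sum_congr rfl
      intro j hj
      simp only [mem_filter, mem_univ, true_and] at hj
      simp [hy, hj]
    have e2 : ∑ j ∈ univ.filter (fun j => i < j), A i j * y j = S2 := by
      apply Finset.sum_congr rfl
      intro j hj
      simp only [mem_filter, mem_univ, true_and] at hj
      simp [hy, not_lt_of_gt hj]
    rw [e1, e2, hyi]
    ring
  have hVdiff : V (fun j => if j ≤ i then xk1 j else xk j) - V y =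
      t * (S1 + A i i * xk i + S2) + (1 / 2) * A i i * t ^ 2 - t * b i := by
    rw [hV, hz]
    simp only
    have e1 : (y + t • (Pi.single i 1 : Fin n → ℝ)) ⬝ᵥ (A *ᵥ (y + t • (Pi.single i 1 : Fin n → ℝ))) =
        y ⬝ᵥ (A *ᵥ y) + 2 * t * (A *ᵥ y) i + t ^ 2 * A i i := by
      rw [mulVec_add, dotProduct_add, add_dotProduct, add_dotProduct]
      rw [hsym y (t • (Pi.single i 1 : Fin n → ℝ))]
      have e2 : (t • (Pi.single i 1 : Fin n → ℝ)) ⬝ᵥ (A *ᵥ y) = t * (A *ᵥ y) i := by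
        rw [smul_dotProduct, single_dotProduct]
        simp [smul_eq_mul]
      have e3 : (t • (Pi.single i 1 : Fin n → ℝ)) ⬝ᵥ (A *ᵥ (t • (Pi.single i 1 : Fin n → ℝ))) = t ^ 2 * A i i := by
        rw [mulVec_smul, dotProduct_smul, smul_dotProduct, single_dotProduct, mulVec_single]
        simp only [smul_eq_mul, mul_one]
        simp [Matrix.col_apply]
        ring
      rw [e2, e3]
      ring
    have e4 : (y + t • (Pi.single i 1 : Fin n → ℝ)) ⬝ᵥ b = y ⬝ᵥ b + t * b i := by
      rw [add_dotProduct, smul_dotProduct, single_dotProduct]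
      simp [smul_eq_mul]
    rw [e1, e4, hsplit]
    ring
  set xhat : ℝ := (1 - ω) * xk i + (ω / A i i) * c with hxhat
  have hmax : xk1 i = max xhat 0 := hproj
  have hkey : t ^ 2 ≤ t * (xhat - xk i) := by
    rcases le_or_gt 0 xhat with h0 | h0
    · have hx1 : xk1 i = xhat := by rw [hmax, max_eq_left h0]
      rw [ht, hx1]
      nlinarith
    · have hx1 : xk1 i = 0 := by rw [hmax, max_eq_right (le_of_lt h0)]
      have hxi := hxk i
      rw [ht, hx1]
      nlinarith
  have hxdiff : xhat - xk i = (ω / A i i) * (c - A i i * xk i) := by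
    rw [hxhat]
    field_simp
    ring
  have hu : A i i * t ^ 2 ≤ ω * (t * (c - A i i * xk i)) := by
    rw [hxdiff] at hkey
    have h2 := mul_le_mul_of_nonneg_left hkey ha.le
    have h3 : A i i * (t * (ω / A i i * (c - A i i * xk i))) =
        ω * (t * (c - A i i * xk i)) := by
      field_simp
    rw [h3] at h2
    exact h2
  have hgoal : t * (S1 + A i i * xk i + S2) + (1 / 2) * A i i * t ^ 2 - t * b i
      ≤ -(A i i / h) * t ^ 2 := by
    have hah : A i i / h = A i i * (2 - ω) / (2 * ω) := by
      rw [hh]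
      rw [div_div_eq_mul_div]
    rw [hah]
    have h2ω : 0 < 2 * ω := by linarith
    rw [← sub_nonneg]
    have heq : -(A i i * (2 - ω) / (2 * ω)) * t ^ 2 -
        (t * (S1 + A i i * xk i + S2) + (1 / 2) * A i i * t ^ 2 - t * b i) =
        (2 * (ω * (t * (c - A i i * xk i))) - 2 * (A i i * t ^ 2)) / (2 * ω) := by
      rw [hc]
      field_simp
      ring
    rw [heq]
    apply div_nonneg _ (le_of_lt h2ω)
    linarith [hu]
  constructor
  · rw [hVdiff]
    exact hgoal
  · have hpos : 0 ≤ A i i / h * t ^ 2 := by positivity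
    linarith
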